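/- The equation x^3 + y^3 = 1729 has infinitely many rational solutions; that is, the set of pairs (x, y) of rational numbers with x^3 + y^3 = 1729 is infinite. -/

import Mathlib

/- Strategy: the cubic x³+y³ = 1729 maps to the elliptic curve Y² = X³ + B with
B = -432·1729² via X ↦ ((62244+Y)/(6X), (62244-Y)/(6X)).  Starting from the rational
point (2987713/36, -5164256735/216) (which is 3·(1596, -52668)), repeated duplication
gives points whose X-coordinate has strictly decreasing 2-adic valuation, hence
infinitely many distinct points, hence infinitely many rational solutions. -/

namespace Taxi1729

def Bc : ℚ := -1291438512

def stepP (p : ℚ × ℚ) : ℚ × ℚ :=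
  ((p.1 ^ 4 - 8 * Bc * p.1) / (4 * p.2 ^ 2),
   (p.1 ^ 6 + 20 * Bc * p.1 ^ 3 - 8 * Bc ^ 2) / (8 * p.2 ^ 3))

def seqP (n : ℕ) : ℚ × ℚ := stepP^[n] (2987713 / 36, -5164256735 / 216)

def Inv (k : ℕ) (p : ℚ × ℚ) : Prop :=
  p.2 ^ 2 = p.1 ^ 3 + Bc ∧ padicValRat 2 p.1 = -(2 * k + 2) ∧
    padicValRat 2 p.2 = -(3 * k + 3)

lemma val2_odd_nat (n : ℕ) (hn : ¬ 2 ∣ n) : padicValRat 2 (n : ℚ) = 0 := by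
  rw [padicValRat.of_nat]
  simp [padicValNat.eq_zero_of_not_dvd hn]

lemma val2_two : padicValRat 2 (2 : ℚ) = 1 := by
  rw [show (2 : ℚ) = ((2 : ℕ) : ℚ) by norm_num, padicValRat.self (by norm_num)]

lemma val2_two_pow_mul (m n : ℕ) (hn : ¬ 2 ∣ n) (hn0 : n ≠ 0) :
    padicValRat 2 ((2 : ℚ) ^ m * (n : ℚ)) = m := by
  rw [padicValRat.mul (pow_ne_zero _ two_ne_zero) (Nat.cast_ne_zero.mpr hn0),
    padicValRat.pow (2 : ℚ), val2_two, val2_odd_nat n hn]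
  ring

lemma vBc : padicValRat 2 Bc = 4 := by
  have h : Bc = -((2 : ℚ) ^ 4 * (80714907 : ℕ)) := by norm_num [Bc]
  rw [h, padicValRat.neg, val2_two_pow_mul 4 80714907 (by decide) (by norm_num)]
  norm_num

lemma v8Bc : padicValRat 2 (8 * Bc) = 7 := by
  have h : 8 * Bc = -((2 : ℚ) ^ 7 * (80714907 : ℕ)) := by norm_num [Bc]
  rw [h, padicValRat.neg, val2_two_pow_mul 7 80714907 (by decide) (by norm_num)]
  norm_num

lemma Bc_ne : Bc ≠ 0 := by norm_num [Bc]

lemma step_inv {k : ℕ} {p : ℚ × ℚ} (h : Inv k p) : Inv (k + 1) (stepP p) := by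
  obtain ⟨hC, hX, hY⟩ := h
  set X := p.1 with hXdef
  set Y := p.2 with hYdef
  have hX0 : X ≠ 0 := by
    intro h0; rw [h0, padicValRat.zero] at hX; omega
  have hY0 : Y ≠ 0 := by
    intro h0; rw [h0, padicValRat.zero] at hY; omega
  -- numerator of new X-coordinate
  have h8BX0 : 8 * Bc * X ≠ 0 := by
    exact mul_ne_zero (mul_ne_zero (by norm_num) Bc_ne) hX0
  have v8BX : padicValRat 2 (8 * Bc * X) = 7 + padicValRat 2 X := by
    rw [padicValRat.mul (mul_ne_zero (by norm_num) Bc_ne) hX0, v8Bc]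
  have hnum0 : X ^ 4 - 8 * Bc * X ≠ 0 := by
    intro h0
    have h3 : X ^ 3 = 8 * Bc := by
      have h4 : X ^ 3 * X = (8 * Bc) * X := by ring_nf; linear_combination h0
      exact mul_right_cancel₀ hX0 h4
    have := congrArg (padicValRat 2) h3
    rw [padicValRat.pow X, v8Bc, hX] at this
    omega
  have vX4 : padicValRat 2 (X ^ 4) = -(8 * (k : ℤ) + 8) := by
    rw [padicValRat.pow X, hX]; ring
  have vnum : padicValRat 2 (X ^ 4 - 8 * Bc * X) = -(8 * (k : ℤ) + 8) := by
    have hadd : X ^ 4 + -(8 * Bc * X) ≠ 0 := by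
      intro h0; apply hnum0; linear_combination h0
    have hlt : padicValRat 2 (X ^ 4) < padicValRat 2 (-(8 * Bc * X)) := by
      rw [vX4, padicValRat.neg, v8BX, hX]; omega
    have := padicValRat.add_eq_of_lt (p := 2) hadd (pow_ne_zero _ hX0)
      (neg_ne_zero.mpr h8BX0) hlt
    rw [vX4] at this
    rw [sub_eq_add_neg]
    exact this
  have hden0 : (4 : ℚ) * Y ^ 2 ≠ 0 := by positivity
  have vden : padicValRat 2 (4 * Y ^ 2) = -(6 * (k : ℤ) + 4) := by
    have h4 : ((4 : ℚ)) = (2 : ℚ) ^ 2 := by norm_num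
    rw [padicValRat.mul (by norm_num) (pow_ne_zero _ hY0), h4,
      padicValRat.pow (2 : ℚ), val2_two, padicValRat.pow Y, hY]
    ring
  set X2 := (X ^ 4 - 8 * Bc * X) / (4 * Y ^ 2) with hX2def
  set Y2 := (X ^ 6 + 20 * Bc * X ^ 3 - 8 * Bc ^ 2) / (8 * Y ^ 3) with hY2def
  have vX2 : padicValRat 2 X2 = -(2 * ((k : ℤ) + 1) + 2) := by
    rw [hX2def, padicValRat.div hnum0 hden0, vnum, vden]; ring
  have hX20 : X2 ≠ 0 := div_ne_zero hnum0 hden0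
  -- new point is on the curve
  have hC2 : Y2 ^ 2 = X2 ^ 3 + Bc := by
    rw [hX2def, hY2def]
    field_simp
    linear_combination (-4096 * Bc * (Y ^ 4 + Y ^ 2 * (X ^ 3 + Bc) + (X ^ 3 + Bc) ^ 2)) * hC
  have vX2cube : padicValRat 2 (X2 ^ 3) = -(6 * (k : ℤ) + 12) := by
    rw [padicValRat.pow X2, vX2]; ring
  have hsum0 : X2 ^ 3 + Bc ≠ 0 := by
    intro h0
    have h3 : X2 ^ 3 = -Bc := by linarith
    have := congrArg (padicValRat 2) h3
    rw [vX2cube, padicValRat.neg, vBc] at this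
    omega
  have vsum : padicValRat 2 (X2 ^ 3 + Bc) = -(6 * (k : ℤ) + 12) := by
    have hlt : padicValRat 2 (X2 ^ 3) < padicValRat 2 Bc := by
      rw [vX2cube, vBc]; omega
    have := padicValRat.add_eq_of_lt (p := 2) hsum0 (pow_ne_zero _ hX20) Bc_ne hlt
    rw [vX2cube] at this; exact this
  have hY20 : Y2 ≠ 0 := by
    intro h0; rw [h0] at hC2; simp at hC2; exact hsum0 hC2.symm
  have vY2 : padicValRat 2 Y2 = -(3 * ((k : ℤ) + 1) + 3) := by
    have h2 : padicValRat 2 (Y2 ^ 2) = 2 * padicValRat 2 Y2 := padicValRat.pow Y2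
    rw [hC2, vsum] at h2
    omega
  refine ⟨?_, ?_, ?_⟩
  · simpa [stepP, ← hXdef, ← hYdef] using hC2
  · simpa [stepP, ← hXdef, ← hYdef, ← hX2def] using (by rw [vX2]; ring)
  · simpa [stepP, ← hXdef, ← hYdef, ← hY2def] using (by rw [vY2]; ring)

lemma inv_seqP (n : ℕ) : Inv n (seqP n) := by
  induction n with
  | zero =>
    refine ⟨by norm_num [seqP, Bc], ?_, ?_⟩
    · have h : ((2987713 : ℚ) / 36) = ((2987713 : ℕ) : ℚ) / ((2 : ℚ) ^ 2 * (9 : ℕ)) := by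
        norm_num
      rw [seqP, Function.iterate_zero_apply]
      show padicValRat 2 ((2987713 : ℚ) / 36) = _
      rw [h, padicValRat.div (by norm_num) (by norm_num),
        val2_odd_nat 2987713 (by decide), val2_two_pow_mul 2 9 (by decide) (by norm_num)]
      norm_num
    · have h : ((-5164256735 : ℚ) / 216) =
          -(((5164256735 : ℕ) : ℚ) / ((2 : ℚ) ^ 3 * (27 : ℕ))) := by norm_num
      rw [seqP, Function.iterate_zero_apply]
      show padicValRat 2 ((-5164256735 : ℚ) / 216) = _
      rw [h, padicValRat.neg, padicValRat.div (by norm_num) (by norm_num),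
        val2_odd_nat 5164256735 (by decide), val2_two_pow_mul 3 27 (by decide) (by norm_num)]
      norm_num
  | succ n ih =>
    rw [seqP, Function.iterate_succ_apply']
    exact step_inv ih

lemma X_ne (n : ℕ) : (seqP n).1 ≠ 0 := by
  intro h0
  have := (inv_seqP n).2.1
  rw [h0, padicValRat.zero] at this
  omega

end Taxi1729

theorem infinitely_many_rational_solutions_1729 :
    {p : ℚ × ℚ | p.1 ^ 3 + p.2 ^ 3 = 1729}.Infinite := by
  apply Set.infinite_of_injective_forall_mem
    (f := fun n : ℕ =>
      ((62244 + (Taxi1729.seqP n).2) / (6 * (Taxi1729.seqP n).1),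
       (62244 - (Taxi1729.seqP n).2) / (6 * (Taxi1729.seqP n).1)))
  · intro m n h
    have h1 := congrArg Prod.fst h
    have h2 := congrArg Prod.snd h
    simp only at h1 h2
    have hm0 := Taxi1729.X_ne m
    have hn0 := Taxi1729.X_ne n
    rw [div_eq_div_iff (by simpa using hm0) (by simpa using hn0)] at h1 h2
    have hXeq : (Taxi1729.seqP m).1 = (Taxi1729.seqP n).1 := by nlinarith [h1, h2]
    have hvm := (Taxi1729.inv_seqP m).2.1
    have hvn := (Taxi1729.inv_seqP n).2.1
    rw [hXeq] at hvm
    rw [hvm] at hvn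
    omega
  · intro n
    simp only [Set.mem_setOf_eq]
    have hC := (Taxi1729.inv_seqP n).1
    have hX0 := Taxi1729.X_ne n
    set X := (Taxi1729.seqP n).1
    set Y := (Taxi1729.seqP n).2
    have hC' : Y ^ 2 = X ^ 3 - 1291438512 := by rw [hC]; norm_num [Taxi1729.Bc]; ring
    field_simp
    linear_combination (373464 : ℚ) * hC'
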